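/- Let α be a type, n : ℕ, l₀, …, l_{n−1} finite lists over α, and rd : α → ℕ such that rd is nondecreasing along each lᵢ. Let r₁ < r₂ < … < r_m be an increasing enumeration of a finite set of naturals containing every value of rd occurring in some lᵢ, and for each j ≤ m let w_{r_j} be a shuffle of the n lists lᵢ.filter (fun x => rd x = r_j). Then the concatenation w_{r₁} ++ w_{r₂} ++ … ++ w_{r_m} is a shuffle of l₀, …, l_{n−1}. -/

import Mathlib

/-- `w` is a shuffle (interleaving) of the family of lists `l i`, `i : Fin n`:
there is a tagged list whose projection is `w` and whose `i`-tagged sublist is `l i`. -/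
def IsInterleaving {α : Type*} {n : ℕ} (l : Fin n → List α) (w : List α) : Prop :=
  ∃ tl : List (Fin n × α), w = tl.map Prod.snd ∧
    ∀ i : Fin n, (tl.filter (fun p => p.1 = i)).map Prod.snd = l i

/-- **Concatenating per-round interleavings.**
If `rd` is nondecreasing along each list `l i`, `rs` is a strictly increasing enumeration
of a finite set of naturals containing every round occurring in the history, and for each
`r ∈ rs` the word `w r` interleaves the round-`r` sublists of the processes, then the
concatenation of the `w r` in the order of `rs` interleaves `l 0, …, l (n-1)`. -/
lemma bucket_flatten {α : Type*} (rd : α → ℕ) (rs : List ℕ) (hrs : rs.Pairwise (· < ·)) :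
    ∀ (L : List α), L.Pairwise (fun a b => rd a ≤ rd b) → (∀ x ∈ L, rd x ∈ rs) →
      (rs.map (fun r => L.filter (fun x => rd x = r))).flatten = L := by
  intro L
  induction L generalizing rs with
  | nil => intro _ _; simp
  | cons a L' ih =>
    intro hP hcov
    obtain ⟨rs₁, rs₂, rfl⟩ := List.append_of_mem (hcov a List.mem_cons_self)
    have hsort := hrs
    rw [List.pairwise_append] at hsort
    obtain ⟨hs₁, hs₂, hcross⟩ := hsort
    have h₁ : ∀ r ∈ rs₁, r < rd a := fun r hr => hcross r hr _ List.mem_cons_self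
    have h₂ : ∀ r ∈ rs₂, rd a < r := fun r hr => (List.pairwise_cons.mp hs₂).1 r hr
    have hge : ∀ x ∈ L', rd a ≤ rd x := (List.pairwise_cons.mp hP).1
    -- buckets with r < rd a are empty
    have hnil : ∀ r ∈ rs₁, (a :: L').filter (fun x => rd x = r) = [] := by
      intro r hr
      rw [List.filter_eq_nil_iff]
      rintro x hx hdec
      simp only [decide_eq_true_eq] at hdec
      rcases List.mem_cons.mp hx with rfl | hx'
      · exact absurd hdec.symm (h₁ r hr).ne
      · exact absurd (hdec ▸ hge x hx') (Nat.not_le.mpr (h₁ r hr))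
    have hnil' : ∀ r ∈ rs₁, L'.filter (fun x => rd x = r) = [] := by
      intro r hr
      rw [List.filter_eq_nil_iff]
      intro x hx hdec
      simp only [decide_eq_true_eq] at hdec
      exact absurd (hdec ▸ hge x hx) (Nat.not_le.mpr (h₁ r hr))
    have hcov' : ∀ x ∈ L', rd x ∈ rs₁ ++ rd a :: rs₂ :=
      fun x hx => hcov x (List.mem_cons_of_mem _ hx)
    have IH := ih (rs₁ ++ rd a :: rs₂) hrs (List.pairwise_cons.mp hP).2 hcov'
    simp only [List.map_append, List.map_cons, List.flatten_append, List.flatten_cons] at IH ⊢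
    have e₁ : (rs₁.map fun r => (a :: L').filter (fun x => rd x = r)).flatten = [] := by
      rw [List.flatten_eq_nil_iff]
      intro xs hxs
      obtain ⟨r, hr, rfl⟩ := List.mem_map.mp hxs
      exact hnil r hr
    have e₁' : (rs₁.map fun r => L'.filter (fun x => rd x = r)).flatten = [] := by
      rw [List.flatten_eq_nil_iff]
      intro xs hxs
      obtain ⟨r, hr, rfl⟩ := List.mem_map.mp hxs
      exact hnil' r hr
    have e₂ : (a :: L').filter (fun x => rd x = rd a) = a :: L'.filter (fun x => rd x = rd a) := by
      simp [List.filter_cons]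
    have e₃ : ∀ r ∈ rs₂, (a :: L').filter (fun x => rd x = r) = L'.filter (fun x => rd x = r) := by
      intro r hr
      simp [List.filter_cons, (h₂ r hr).ne]
    have e₄ : (rs₂.map fun r => (a :: L').filter (fun x => rd x = r)) =
        (rs₂.map fun r => L'.filter (fun x => rd x = r)) :=
      List.map_congr_left e₃
    rw [e₁, e₂, e₄, List.nil_append, List.cons_append]
    rw [e₁', List.nil_append] at IH
    rw [IH]

lemma IsInterleaving.append {α : Type*} {n : ℕ} {l l' : Fin n → List α} {w w' : List α}
    (h : IsInterleaving l w) (h' : IsInterleaving l' w') :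
    IsInterleaving (fun i => l i ++ l' i) (w ++ w') := by
  obtain ⟨tl, rfl, h2⟩ := h
  obtain ⟨tl', rfl, h2'⟩ := h'
  exact ⟨tl ++ tl', by simp, fun i => by simp [List.filter_append, h2 i, h2' i]⟩

lemma IsInterleaving.flatten {α : Type*} {n : ℕ} (rs : List ℕ) (f : Fin n → ℕ → List α)
    (w : ℕ → List α) (h : ∀ r ∈ rs, IsInterleaving (fun i => f i r) (w r)) :
    IsInterleaving (fun i => (rs.map (f i)).flatten) ((rs.map w).flatten) := by
  induction rs with
  | nil => exact ⟨[], by simp, fun i => by simp⟩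
  | cons r rs ih =>
    have := (h r List.mem_cons_self).append
      (ih fun r' hr' => h r' (List.mem_cons_of_mem _ hr'))
    simpa using this

theorem concat_of_round_interleavings
    {α : Type*} {n : ℕ} (rd : α → ℕ) (l : Fin n → List α)
    (hmono : ∀ i : Fin n, (l i).Pairwise (fun a b => rd a ≤ rd b))
    (rs : List ℕ) (hrs : rs.Pairwise (· < ·))
    (hcover : ∀ (i : Fin n), ∀ x ∈ l i, rd x ∈ rs)
    (w : ℕ → List α)
    (hw : ∀ r ∈ rs, IsInterleaving (fun i => (l i).filter (fun x => rd x = r)) (w r)) :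
    IsInterleaving l (rs.map w).flatten := by
  have key : (fun i => (rs.map (fun r => (l i).filter (fun x => rd x = r))).flatten) = l :=
    funext fun i => bucket_flatten rd rs hrs (l i) (hmono i) (hcover i)
  have h := IsInterleaving.flatten rs (fun i r => (l i).filter (fun x => rd x = r)) w hw
  rwa [key] at h
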